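/- Let V ∈ ℝ³, ω ∈ S², V_∥ = (V·ω)ω, V_⊥ = V − V_∥, and M(v) = e^{−|v|²/2}. Then for all v ∈ ℝ³, M(v + V_∥) M(v + V)³ ≤ M(V_⊥)^{1/2}, i.e. e^{−|v+V_∥|²/2} e^{−3|v+V|²/2} ≤ e^{−|V_⊥|²/4}. -/
import Mathlib


open Real
open scoped RealInnerProductSpace

noncomputable section

abbrev E3 := EuclideanSpace ℝ (Fin 3)

theorem gaussian_parallel_perp_inequality (V ω : E3) (hω : ω ∈ Metric.sphere (0 : E3) 1)
    (Vpar Vperp : E3) (hpar : Vpar = ⟪V, ω⟫ • ω) (hperp : Vperp = V - Vpar) :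
    ∀ v : E3,
      Real.exp (-‖v + Vpar‖ ^ 2 / 2) * Real.exp (-(3 * ‖v + V‖ ^ 2) / 2)
        ≤ Real.exp (-‖Vperp‖ ^ 2 / 4) := by
  intro v
  rw [← Real.exp_add]
  apply Real.exp_le_exp.mpr
  have hvV : v + V = (v + Vpar) + Vperp := by rw [hperp]; abel
  set a := v + Vpar with ha
  have h1 : ‖v + V‖ ^ 2 = ‖a‖ ^ 2 + 2 * ⟪a, Vperp⟫ + ‖Vperp‖ ^ 2 := by
    rw [hvV]; exact norm_add_sq_real a Vperp
  have hCS : -(‖a‖ * ‖Vperp‖) ≤ ⟪a, Vperp⟫ :=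
    neg_le_of_abs_le (abs_real_inner_le_norm a Vperp)
  nlinarith [sq_nonneg (2 * ‖a‖ - (3/2) * ‖Vperp‖), sq_nonneg ‖Vperp‖, norm_nonneg a, norm_nonneg Vperp]
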